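/- Let Q ∈ ℝ, Q ≠ 0, a > 0, and b = Q²+a²-1. If 0 < a < 1, then (a(b-√(b²+4Q²))² + 4aQ²) / ((b-√(b²+4Q²)-2Q²)² + 4a²Q²) < 1. -/
import Mathlib


theorem lemma_ineq_one (Q a : ℝ) (hQ : Q ≠ 0) (ha : 0 < a) (ha1 : a < 1) :
    let b := Q ^ 2 + a ^ 2 - 1
    (a * (b - Real.sqrt (b ^ 2 + 4 * Q ^ 2)) ^ 2 + 4 * a * Q ^ 2) /
      ((b - Real.sqrt (b ^ 2 + 4 * Q ^ 2) - 2 * Q ^ 2) ^ 2 + 4 * a ^ 2 * Q ^ 2) < 1 := by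
  intro b
  set s := Real.sqrt (b ^ 2 + 4 * Q ^ 2) with hs
  have hb : b = Q ^ 2 + a ^ 2 - 1 := rfl
  have hQ2 : 0 < Q ^ 2 := by positivity
  have hs0 : 0 ≤ s := Real.sqrt_nonneg _
  have hs2 : s ^ 2 = b ^ 2 + 4 * Q ^ 2 := Real.sq_sqrt (by positivity)
  have hbs : b < s := by nlinarith
  have hD : 0 < (b - s - 2 * Q ^ 2) ^ 2 + 4 * a ^ 2 * Q ^ 2 := by
    have : 0 < a ^ 2 * Q ^ 2 := mul_pos (pow_pos ha 2) hQ2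
    nlinarith [sq_nonneg (b - s - 2 * Q ^ 2)]
  rw [div_lt_one hD]
  have hP : 0 < (Q ^ 2 + (1 - a) ^ 2) * (4 * Q ^ 2 - 2 * (b - s) * (1 + a)) := by
    apply mul_pos
    · nlinarith [sq_nonneg (1 - a)]
    · nlinarith
  have key : ((b - s - 2 * Q ^ 2) ^ 2 + 4 * a ^ 2 * Q ^ 2) -
      (a * (b - s) ^ 2 + 4 * a * Q ^ 2) =
      (Q ^ 2 + (1 - a) ^ 2) * (4 * Q ^ 2 - 2 * (b - s) * (1 + a)) := by
    rw [hb] at hs2 ⊢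
    linear_combination ((1 : ℝ) - a) * hs2
  linarith [hP, key]
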